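/- Let t_Z be a free abelian group of finite rank with a finite spanning multiset of primitive cocharacters γ_1,...,γ_n ∈ t_Z, and for λ in the dual lattice write λ_i = ⟨λ, γ_i⟩. Call a nonzero primitive element of the dual lattice with minimal (inclusion-wise) support among nonzero elements a cocircuit. Then every λ in the dual lattice can be written as a sum λ = μ¹ + ... + μᵐ of cocircuits, each of whose support is contained in the support of λ (the support of λ being the set of indices i with λ_i ≠ 0). -/

import Mathlib

open scoped BigOperators

/-- The support of a dual-lattice element `lam` with respect to the cocharacters `γ`:
the set of indices `i` with `λ_i = ⟨λ, γ_i⟩ ≠ 0`. -/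
def Supp {tZ : Type} [AddCommGroup tZ] {n : ℕ} (γ : Fin n → tZ)
    (lam : tZ →ₗ[ℤ] ℤ) : Set (Fin n) := {i | lam (γ i) ≠ 0}

/-- A dual-lattice element is primitive if it is not a nontrivial integer multiple. -/
def IsPrimitiveDual {tZ : Type} [AddCommGroup tZ] (lam : tZ →ₗ[ℤ] ℤ) : Prop :=
  ∀ (c : ℤ) (μ : tZ →ₗ[ℤ] ℤ), lam = c • μ → IsUnit c

/-- A cocircuit: a nonzero primitive element of the dual lattice whose support is
minimal (inclusion-wise) among supports of nonzero elements. -/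
def IsCocircuit {tZ : Type} [AddCommGroup tZ] {n : ℕ} (γ : Fin n → tZ)
    (lam : tZ →ₗ[ℤ] ℤ) : Prop :=
  lam ≠ 0 ∧ IsPrimitiveDual lam ∧
    ∀ μ : tZ →ₗ[ℤ] ℤ, μ ≠ 0 → Supp γ μ ⊆ Supp γ lam → Supp γ μ = Supp γ lam

namespace CocircuitAux

variable {tZ : Type} [AddCommGroup tZ] {n : ℕ} {γ : Fin n → tZ}

lemma mem_supp {lam : tZ →ₗ[ℤ] ℤ} {i : Fin n} : i ∈ Supp γ lam ↔ lam (γ i) ≠ 0 := Iff.rfl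

lemma supp_neg (lam : tZ →ₗ[ℤ] ℤ) : Supp γ (-lam) = Supp γ lam := by
  ext i; simp [Supp]

lemma cocircuit_neg {lam : tZ →ₗ[ℤ] ℤ} (h : IsCocircuit γ lam) : IsCocircuit γ (-lam) := by
  obtain ⟨h1, h2, h3⟩ := h
  refine ⟨neg_ne_zero.mpr h1, ?_, ?_⟩
  · intro c ρ hc
    exact h2 c (-ρ) (by rw [smul_neg, ← hc, neg_neg])
  · intro ρ hρ hsub
    rw [supp_neg] at hsub ⊢
    exact h3 ρ hρ hsub

/-- Sum-of-cocircuits predicate. -/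
def IsCCSum (γ : Fin n → tZ) (S : Set (Fin n)) (lam : tZ →ₗ[ℤ] ℤ) : Prop :=
  ∃ (m : ℕ) (μ : Fin m → (tZ →ₗ[ℤ] ℤ)),
    (∀ k, IsCocircuit γ (μ k) ∧ Supp γ (μ k) ⊆ S) ∧ lam = ∑ k, μ k

lemma IsCCSum.zero (S : Set (Fin n)) : IsCCSum γ S 0 :=
  ⟨0, fun k => 0, fun k => absurd k.2 (by omega), by simp⟩

lemma IsCCSum.single {S : Set (Fin n)} {μ : tZ →ₗ[ℤ] ℤ} (h : IsCocircuit γ μ)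
    (hs : Supp γ μ ⊆ S) : IsCCSum γ S μ :=
  ⟨1, fun _ => μ, fun _ => ⟨h, hs⟩, by simp⟩

lemma IsCCSum.add {S : Set (Fin n)} {lam lam' : tZ →ₗ[ℤ] ℤ}
    (h : IsCCSum γ S lam) (h' : IsCCSum γ S lam') : IsCCSum γ S (lam + lam') := by
  obtain ⟨m, μ, hμ, rfl⟩ := h
  obtain ⟨m', μ', hμ', rfl⟩ := h'
  refine ⟨m + m', Fin.append μ μ', ?_, ?_⟩
  · intro k
    refine Fin.addCases (fun i => ?_) (fun i => ?_) k
    · simpa [Fin.append_left] using hμ i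
    · simpa [Fin.append_right] using hμ' i
  · rw [Fin.sum_univ_add]
    simp [Fin.append_left, Fin.append_right]

lemma IsCCSum.neg {S : Set (Fin n)} {lam : tZ →ₗ[ℤ] ℤ}
    (h : IsCCSum γ S lam) : IsCCSum γ S (-lam) := by
  obtain ⟨m, μ, hμ, rfl⟩ := h
  exact ⟨m, fun k => -μ k, fun k => ⟨cocircuit_neg (hμ k).1, by rw [supp_neg]; exact (hμ k).2⟩,
    by rw [← Finset.sum_neg_distrib]⟩

lemma IsCCSum.zsmul {S : Set (Fin n)} {lam : tZ →ₗ[ℤ] ℤ}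
    (h : IsCCSum γ S lam) (c : ℤ) : IsCCSum γ S (c • lam) := by
  induction c using Int.induction_on with
  | zero => simpa using IsCCSum.zero S
  | succ i ih => rw [add_smul, one_smul]; exact ih.add h
  | pred i ih => rw [sub_smul, one_smul, sub_eq_add_neg]; exact ih.add h.neg

lemma IsCCSum.mono {S S' : Set (Fin n)} {lam : tZ →ₗ[ℤ] ℤ}
    (h : IsCCSum γ S lam) (hS : S ⊆ S') : IsCCSum γ S' lam := by
  obtain ⟨m, μ, hμ, rfl⟩ := h
  exact ⟨m, μ, fun k => ⟨(hμ k).1, (hμ k).2.trans hS⟩, rfl⟩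

section WithGen

variable (hsg : ∀ v : tZ, ∃ c : Fin n → ℕ, v = ∑ j, (c j : ℤ) • γ j)

include hsg

lemma eq_zero_of_vanish (ν : tZ →ₗ[ℤ] ℤ) (h : ∀ i, ν (γ i) = 0) : ν = 0 := by
  ext v
  obtain ⟨c, rfl⟩ := hsg v
  simp [map_sum, h]

lemma exists_ne_of_ne_zero {ν : tZ →ₗ[ℤ] ℤ} (h : ν ≠ 0) : ∃ i, ν (γ i) ≠ 0 := by
  by_contra hc
  push_neg at hc
  exact h (eq_zero_of_vanish hsg ν hc)

lemma dvd_all {ν : tZ →ₗ[ℤ] ℤ} {d : ℤ} (h : ∀ i, d ∣ ν (γ i)) : ∀ v, d ∣ ν v := by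
  intro v
  obtain ⟨c, rfl⟩ := hsg v
  rw [map_sum]
  refine Finset.dvd_sum fun j _ => ?_
  rw [map_smul, smul_eq_mul]
  exact Dvd.dvd.mul_left (h j) _

lemma exists_div {ν : tZ →ₗ[ℤ] ℤ} {d : ℤ} (hd : d ≠ 0) (h : ∀ i, d ∣ ν (γ i)) :
    ∃ μ : tZ →ₗ[ℤ] ℤ, ν = d • μ := by
  have hv : ∀ v, d ∣ ν v := dvd_all hsg h
  refine ⟨{ toFun := fun v => ν v / d
            map_add' := ?_
            map_smul' := ?_ }, ?_⟩
  · intro v w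
    obtain ⟨q, hq⟩ := hv v
    obtain ⟨r, hr⟩ := hv w
    show ν (v + w) / d = ν v / d + ν w / d
    rw [map_add, hq, hr, ← mul_add, Int.mul_ediv_cancel_left _ hd,
      Int.mul_ediv_cancel_left _ hd, Int.mul_ediv_cancel_left _ hd]
  · intro c v
    obtain ⟨q, hq⟩ := hv v
    simp only [map_smul, smul_eq_mul, RingHom.id_apply, hq]
    rw [mul_left_comm, Int.mul_ediv_cancel_left _ hd, Int.mul_ediv_cancel_left _ hd]
  · ext v
    simp only [LinearMap.smul_apply, LinearMap.coe_mk, AddHom.coe_mk, smul_eq_mul]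
    exact (Int.mul_ediv_cancel' (hv v)).symm

/-- Key lemma A: inside the support of any nonzero functional there is a cocircuit. -/
lemma exists_cocircuit {lam : tZ →ₗ[ℤ] ℤ} (h : lam ≠ 0) :
    ∃ μ, IsCocircuit γ μ ∧ Supp γ μ ⊆ Supp γ lam := by
  classical
  have hex : ∃ c : ℕ, ∃ ν : tZ →ₗ[ℤ] ℤ, ν ≠ 0 ∧ Supp γ ν ⊆ Supp γ lam ∧ (Supp γ ν).ncard = c :=
    ⟨(Supp γ lam).ncard, lam, h, le_refl _, rfl⟩
  obtain ⟨ν, hν0, hνsub, hνcard⟩ := Nat.find_spec hex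
  have hmin : ∀ ρ : tZ →ₗ[ℤ] ℤ, ρ ≠ 0 → Supp γ ρ ⊆ Supp γ lam →
      (Supp γ ν).ncard ≤ (Supp γ ρ).ncard := by
    intro ρ hρ0 hρsub
    rw [hνcard]
    exact Nat.find_min' hex ⟨ρ, hρ0, hρsub, rfl⟩
  -- divide by the gcd of the values
  set d : ℤ := Finset.gcd Finset.univ (fun i => ν (γ i)) with hd_def
  have hdvd : ∀ i, d ∣ ν (γ i) := fun i => Finset.gcd_dvd (Finset.mem_univ i)
  have hd0 : d ≠ 0 := by
    intro h0
    apply hν0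
    refine eq_zero_of_vanish hsg ν fun i => ?_
    have := hdvd i
    rw [h0] at this
    exact zero_dvd_iff.mp this
  obtain ⟨μ, hμ⟩ := exists_div hsg hd0 hdvd
  have happ : ∀ i, ν (γ i) = d * μ (γ i) := fun i => by
    rw [hμ]; simp
  have hμ0 : μ ≠ 0 := by
    intro h0
    apply hν0
    rw [hμ, h0, smul_zero]
  have hsupp : Supp γ μ = Supp γ ν := by
    ext i
    simp only [mem_supp, happ i, mul_ne_zero_iff]
    exact ⟨fun h' => ⟨hd0, h'⟩, fun h' => h'.2⟩
  refine ⟨μ, ⟨hμ0, ?_, ?_⟩, hsupp.le.trans hνsub⟩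
  · intro c ρ hc
    have hdc : ∀ i, d * c ∣ ν (γ i) := by
      intro i
      rw [happ i, hc]
      simp only [LinearMap.smul_apply, smul_eq_mul]
      exact ⟨ρ (γ i), by ring⟩
    have : d * c ∣ d := Finset.dvd_gcd fun i _ => hdc i
    obtain ⟨k, hk⟩ := this
    have : d * 1 = d * (c * k) := by rw [mul_one]; rw [mul_assoc] at hk; exact hk
    exact IsUnit.of_mul_eq_one (a := c) k (mul_left_cancel₀ hd0 this).symm
  · intro ρ hρ0 hρsub
    have hρsub' : Supp γ ρ ⊆ Supp γ lam := hρsub.trans (hsupp.le.trans hνsub)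
    refine Set.eq_of_subset_of_ncard_le hρsub ?_ (Set.toFinite _)
    rw [hsupp]
    exact hmin ρ hρ0 hρsub'

/-- Main induction: every functional is a sum of cocircuits supported in its support. -/
lemma main : ∀ (k : ℕ) (lam : tZ →ₗ[ℤ] ℤ), (Supp γ lam).ncard ≤ k →
    IsCCSum γ (Supp γ lam) lam := by
  intro k
  induction k with
  | zero =>
    intro lam hcard
    have : lam = 0 := by
      refine eq_zero_of_vanish hsg lam fun i => ?_
      by_contra hne
      have hi : i ∈ Supp γ lam := hne
      have : 0 < (Supp γ lam).ncard := by
        rw [Set.ncard_pos (Set.toFinite _)]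
        exact ⟨i, hi⟩
      omega
    rw [this]
    exact IsCCSum.zero _
  | succ k ih =>
    intro lam hcard
    by_cases hlam : lam = 0
    · rw [hlam]; exact IsCCSum.zero _
    obtain ⟨μ, hμcc, hμsub⟩ := exists_cocircuit hsg hlam
    -- for every i, (μ (γ i)) • lam is a sum of cocircuits in Supp lam
    have hstep : ∀ i, IsCCSum γ (Supp γ lam) (μ (γ i) • lam) := by
      intro i
      by_cases hμi : μ (γ i) = 0
      · rw [hμi, zero_smul]; exact IsCCSum.zero _
      · set lam' : tZ →ₗ[ℤ] ℤ := μ (γ i) • lam - lam (γ i) • μ with hlam'_def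
        have hsub' : Supp γ lam' ⊆ Supp γ lam \ {i} := by
          intro j hj
          have hval : μ (γ i) * lam (γ j) - lam (γ i) * μ (γ j) ≠ 0 := by
            simpa [lam', Supp, sub_ne_zero, smul_eq_mul] using hj
          constructor
          · by_contra hjl
            have hl0 : lam (γ j) = 0 := by simpa [Supp] using hjl
            have hm0 : μ (γ j) = 0 := by
              by_contra hm
              exact hjl (hμsub hm)
            rw [hl0, hm0] at hval
            simp at hval
          · intro hji
            rw [Set.mem_singleton_iff] at hji
            subst hji
            rw [mul_comm] at hval
            simp at hval
        have hi_in : i ∈ Supp γ lam := hμsub hμi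
        have hcard' : (Supp γ lam').ncard ≤ k := by
          have h1 : (Supp γ lam').ncard ≤ (Supp γ lam \ {i}).ncard :=
            Set.ncard_le_ncard hsub' (Set.toFinite _)
          have h2 : (Supp γ lam \ {i}).ncard < (Supp γ lam).ncard :=
            Set.ncard_diff_singleton_lt_of_mem hi_in (Set.toFinite _)
          omega
        have hlam'sum : IsCCSum γ (Supp γ lam) lam' := by
          refine (ih lam' hcard').mono ?_
          exact (hsub'.trans (Set.diff_subset))
        have hμsum : IsCCSum γ (Supp γ lam) (lam (γ i) • μ) :=
          (IsCCSum.single hμcc hμsub).zsmul _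
        have := hlam'sum.add hμsum
        rwa [hlam'_def, sub_add_cancel] at this
    -- the set of integers c with c • lam a cocircuit sum is a subgroup of ℤ
    set I : AddSubgroup ℤ :=
      { carrier := {c : ℤ | IsCCSum γ (Supp γ lam) (c • lam)}
        add_mem' := fun {a} {b} ha hb => by
          simp only [Set.mem_setOf_eq, add_smul] at *
          exact ha.add hb
        zero_mem' := by
          simp only [Set.mem_setOf_eq, zero_smul]
          exact IsCCSum.zero _
        neg_mem' := fun {a} ha => by
          simp only [Set.mem_setOf_eq, neg_smul] at *
          exact ha.neg } with hI_def
    have hmemI : ∀ i, μ (γ i) ∈ I := fun i => hstep i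
    obtain ⟨g, hg⟩ := Int.subgroup_cyclic I
    have hgdvd : ∀ i, g ∣ μ (γ i) := by
      intro i
      have : μ (γ i) ∈ AddSubgroup.closure ({g} : Set ℤ) := by
        rw [← hg]; exact hmemI i
      obtain ⟨c, hc⟩ := AddSubgroup.mem_closure_singleton.mp this
      exact ⟨c, by rw [← hc, smul_eq_mul]; ring⟩
    have hg0 : g ≠ 0 := by
      intro h0
      obtain ⟨i, hi⟩ := exists_ne_of_ne_zero hsg hμcc.1
      obtain ⟨c, hc⟩ := hgdvd i
      rw [h0, zero_mul] at hc
      exact hi hc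
    obtain ⟨ρ, hρ⟩ := exists_div hsg hg0 hgdvd
    have hgu : IsUnit g := hμcc.2.1 g ρ hρ
    have h1I : (1 : ℤ) ∈ I := by
      rw [hg]
      rcases Int.isUnit_iff.mp hgu with h | h
      · exact AddSubgroup.mem_closure_singleton.mpr ⟨1, by simp [h]⟩
      · exact AddSubgroup.mem_closure_singleton.mpr ⟨-1, by simp [h]⟩
    have : IsCCSum γ (Supp γ lam) ((1 : ℤ) • lam) := h1I
    rwa [one_smul] at this

end WithGen

end CocircuitAux

/-- Every element of the dual lattice is a sum of cocircuits supported in its support. -/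
theorem stmt0 (tZ : Type) [AddCommGroup tZ] [Module.Free ℤ tZ] [Module.Finite ℤ tZ]
    (n : ℕ) (γ : Fin n → tZ)
    (hne : ∀ i, γ i ≠ 0)
    (hprim : ∀ i, ∀ (c : ℤ) (w : tZ), γ i = c • w → IsUnit c)
    (hspanother : ∀ i, ∃ (d : ℤ) (c : Fin n → ℤ), d ≠ 0 ∧ c i = 0 ∧
      d • γ i = ∑ j, c j • γ j)
    (hsemigroup : ∀ v : tZ, ∃ c : Fin n → ℕ, v = ∑ j, (c j : ℤ) • γ j)
    (lam : tZ →ₗ[ℤ] ℤ) :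
    ∃ (m : ℕ) (μ : Fin m → (tZ →ₗ[ℤ] ℤ)),
      (∀ k, IsCocircuit γ (μ k) ∧ Supp γ (μ k) ⊆ Supp γ lam) ∧
      lam = ∑ k, μ k :=
  CocircuitAux.main hsemigroup (Supp γ lam).ncard lam (le_refl _)
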